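/- For each natural number d ≥ 1, the function s ↦ μ̃_d(s) is even, continuous, strictly decreasing on [0,∞), and tends to 0 as s → ∞. Moreover, μ̃_d(0)/ln d tends to √(2/π) as d → ∞ (i.e. μ̃_d(0) ∼ 2·φ(0)·ln d), and there is a constant C > 0 such that μ̃_d(s) ≤ C·ln d for all real s and all natural d ≥ 2. -/

import Mathlib

open MeasureTheory ProbabilityTheory Real Set Filter Topology

/-- The standard Gaussian measure `N(0,1)` on `ℝ`. -/
noncomputable def γ : Measure ℝ := gaussianReal 0 1

/-- `μ̃_d(s) = E min(|Z+s|⁻¹, d)` for a standard normal `Z`. -/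
noncomputable def tmu (d : ℕ) (s : ℝ) : ℝ := ∫ z, min |z + s|⁻¹ (d : ℝ) ∂γ

/-- The standard normal density `φ(x) = (2π)^{-1/2} e^{-x²/2}`. -/
noncomputable def phi (x : ℝ) : ℝ := Real.exp (-x ^ 2 / 2) / Real.sqrt (2 * Real.pi)

lemma phi_eq : phi = gaussianPDFReal 0 1 := by
  ext x
  simp [phi, gaussianPDFReal, div_eq_inv_mul, mul_comm]

lemma phi_pos (x : ℝ) : 0 < phi x := by rw [phi_eq]; exact gaussianPDFReal_pos _ _ _ one_ne_zero

lemma phi_nonneg (x : ℝ) : 0 ≤ phi x := (phi_pos x).le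

lemma integrable_phi : Integrable phi := by rw [phi_eq]; exact integrable_gaussianPDFReal 0 1

lemma integral_phi : ∫ x, phi x = 1 := by rw [phi_eq]; exact integral_gaussianPDFReal_eq_one 0 one_ne_zero

lemma measurable_phi : Measurable phi := by rw [phi_eq]; exact measurable_gaussianPDFReal 0 1

lemma continuous_phi : Continuous phi := by
  unfold phi
  fun_prop

lemma phi_even (x : ℝ) : phi (-x) = phi x := by simp [phi]

lemma phi_anti {x y : ℝ} (h : x ^ 2 ≤ y ^ 2) : phi y ≤ phi x := by
  unfold phi
  have h2 : (0:ℝ) < Real.sqrt (2 * Real.pi) := Real.sqrt_pos.2 (by positivity)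
  exact (div_le_div_iff_of_pos_right h2).2 (Real.exp_le_exp.2 (by linarith))

lemma phi_le_phi_zero (x : ℝ) : phi x ≤ phi 0 := phi_anti (by simpa using sq_nonneg x)

lemma phi_lt {x y : ℝ} (h : x ^ 2 < y ^ 2) : phi y < phi x := by
  unfold phi
  have h2 : (0:ℝ) < Real.sqrt (2 * Real.pi) := Real.sqrt_pos.2 (by positivity)
  exact (div_lt_div_iff_of_pos_right h2).2 (Real.exp_lt_exp.2 (by linarith))

lemma phi_ge (x : ℝ) : phi 0 * (1 - x ^ 2 / 2) ≤ phi x := by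
  unfold phi
  simp only [neg_zero, ne_eq, OfNat.ofNat_ne_zero, not_false_eq_true, zero_pow, zero_div,
    Real.exp_zero]
  rw [div_mul_eq_mul_div, one_mul, div_le_div_iff_of_pos_right (Real.sqrt_pos.2 (by positivity))]
  have := Real.add_one_le_exp (-x ^ 2 / 2)
  linarith

/-- clipped inverse -/
noncomputable def F (d : ℕ) (x : ℝ) : ℝ := min |x|⁻¹ (d : ℝ)

lemma F_nonneg (d : ℕ) (x : ℝ) : 0 ≤ F d x := le_min (by positivity) (by positivity)

lemma F_le (d : ℕ) (x : ℝ) : F d x ≤ d := min_le_right _ _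

lemma F_even (d : ℕ) (x : ℝ) : F d (-x) = F d x := by simp [F]

lemma measurable_F (d : ℕ) : Measurable (F d) :=
  ((measurable_abs).inv).min measurable_const

lemma F_anti {d : ℕ} {x y : ℝ} (hx : x ≠ 0) (h : |x| ≤ |y|) : F d y ≤ F d x := by
  unfold F
  have hx' : 0 < |x| := abs_pos.2 hx
  exact min_le_min (by gcongr) le_rfl

/-- representation of tmu as a Lebesgue integral against the density -/
lemma integral_gamma (g : ℝ → ℝ) (hg : Measurable g) :
    ∫ z, g z ∂γ = ∫ x, phi x * g x := by
  have h1 : γ = volume.withDensity (fun x => ((phi x).toNNReal : ENNReal)) := by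
    rw [γ, gaussianReal_of_var_ne_zero 0 one_ne_zero]
    congr 1
    ext x
    rw [gaussianPDF, ← phi_eq, ENNReal.ofReal]
  rw [h1, integral_withDensity_eq_integral_smul (measurable_phi.real_toNNReal) g]
  congr 1
  ext x
  simp [NNReal.smul_def, Real.coe_toNNReal _ (phi_nonneg x)]

lemma tmu_eq (d : ℕ) (s : ℝ) : tmu d s = ∫ x, F d x * phi (x - s) := by
  rw [tmu]
  have h1 : ∫ z, min |z + s|⁻¹ (d:ℝ) ∂γ = ∫ z, phi z * F d (z + s) := by
    exact integral_gamma _ (((measurable_id.add_const s).abs.inv).min measurable_const)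
  rw [h1, ← integral_sub_right_eq_self (fun z => phi z * F d (z + s)) s]
  congr 1
  ext x
  simp only [sub_add_cancel]
  ring

lemma integrable_Fphi (d : ℕ) (a b s : ℝ) :
    Integrable (fun x : ℝ => F d (a * x + b) * phi (x - s)) := by
  have hφ : Integrable (fun x : ℝ => phi (x - s)) := integrable_phi.comp_sub_right s
  apply Integrable.bdd_mul (c := d) hφ
  · exact ((measurable_F d).comp ((measurable_const_mul a).add_const b)).aestronglyMeasurable
  · exact Filter.Eventually.of_forall fun x => by
      rw [Real.norm_eq_abs, abs_of_nonneg (F_nonneg _ _)]; exact F_le _ _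

instance : IsProbabilityMeasure γ := by unfold γ; infer_instance

lemma gamma_ac : γ ≪ (volume : Measure ℝ) := gaussianReal_absolutelyContinuous 0 one_ne_zero

lemma tmu_even (d : ℕ) (s : ℝ) : tmu d (-s) = tmu d s := by
  rw [tmu_eq, tmu_eq, ← integral_neg_eq_self (fun x => F d x * phi (x - s)) volume]
  congr 1
  ext x
  rw [F_even d x, show (-x - s : ℝ) = -(x + s) by ring, phi_even,
    show (x - -s : ℝ) = x + s by ring]

lemma tmu_continuous (d : ℕ) : Continuous (tmu d) := by
  rw [continuous_iff_continuousAt]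
  intro s₀
  unfold tmu
  apply continuousAt_of_dominated (bound := fun _ => (d : ℝ))
  · filter_upwards with s
    exact (((measurable_id.add_const s).abs.inv).min measurable_const).aestronglyMeasurable
  · filter_upwards with s
    filter_upwards with z
    rw [Real.norm_eq_abs, abs_of_nonneg (le_min (by positivity) (by positivity))]
    exact min_le_right _ _
  · exact integrable_const _
  · have hz : γ {-s₀} = 0 := gamma_ac (measure_singleton _)
    rw [ae_iff]
    refine measure_mono_null (fun z hz => ?_) hz
    simp only [mem_setOf_eq, mem_singleton_iff] at *
    by_contra hne
    apply hz
    have habs : |z + s₀| ≠ 0 := by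
      simp only [ne_eq, abs_eq_zero]
      intro h
      exact hne (by linarith)
    exact (((continuous_abs.comp (continuous_const.add continuous_id)).continuousAt.inv₀
      habs).min continuousAt_const)

lemma tmu_tendsto (d : ℕ) : Tendsto (tmu d) atTop (nhds 0) := by
  unfold tmu
  have h0 : (0 : ℝ) = ∫ (_ : ℝ), (0:ℝ) ∂γ := by simp
  rw [h0]
  apply tendsto_integral_filter_of_dominated_convergence (bound := fun _ => (d : ℝ))
  · filter_upwards with s
    exact (((measurable_id.add_const s).abs.inv).min measurable_const).aestronglyMeasurable
  · filter_upwards with s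
    filter_upwards with z
    rw [Real.norm_eq_abs, abs_of_nonneg (le_min (by positivity) (by positivity))]
    exact min_le_right _ _
  · exact integrable_const _
  · filter_upwards with z
    have h1 : Tendsto (fun s : ℝ => |z + s|) atTop atTop :=
      tendsto_abs_atTop_atTop.comp (tendsto_atTop_add_const_left _ z tendsto_id)
    have h2 : Tendsto (fun s : ℝ => |z + s|⁻¹) atTop (nhds 0) :=
      tendsto_inv_atTop_zero.comp h1
    apply squeeze_zero (fun s => le_min (by positivity) (by positivity)) (fun s => min_le_left _ _) h2

lemma tmu_strictAnti (d : ℕ) (hd : 1 ≤ d) : StrictAntiOn (tmu d) (Set.Ici 0) := by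
  intro s hs t ht hst
  simp only [mem_Ici] at hs ht
  rw [← sub_pos]
  set m : ℝ := (s + t) / 2 with hm_def
  set h : ℝ := (t - s) / 2 with hh_def
  have hm : 0 < m := by simp only [hm_def]; linarith
  have hh : 0 < h := by simp only [hh_def]; linarith
  set g : ℝ → ℝ := fun u => F d (u + m) * phi (u + h) - F d (u + m) * phi (u - h) with hg_def
  set H : ℝ → ℝ := fun u => (F d (m - u) - F d (u + m)) * (phi (u - h) - phi (u + h)) with hH_def
  have hgneg : ∀ u : ℝ, g (-u) = F d (m - u) * phi (u - h) - F d (m - u) * phi (u + h) := by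
    intro u
    simp only [hg_def]
    rw [show -u + m = m - u from by ring, show -u + h = -(u - h) from by ring,
      show -u - h = -(u + h) from by ring, phi_even, phi_even]
  -- integrability
  have hI1 : Integrable (fun x : ℝ => F d x * phi (x - s)) := by
    have := integrable_Fphi d 1 0 s; simpa using this
  have hI2 : Integrable (fun x : ℝ => F d x * phi (x - t)) := by
    have := integrable_Fphi d 1 0 t; simpa using this
  have hg_int : Integrable g := by
    have h1 := integrable_Fphi d 1 m (-h)
    have h2 := integrable_Fphi d 1 m h
    have := h1.sub h2
    apply this.congr
    filter_upwards with u
    simp only [Pi.sub_apply, hg_def, one_mul]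
    rw [show u - -h = u + h from by ring]
  have hgneg_int : Integrable (fun u : ℝ => g (-u)) := by
    have h1 := integrable_Fphi d (-1) m h
    have h2 := integrable_Fphi d (-1) m (-h)
    have := h1.sub h2
    apply this.congr
    filter_upwards with u
    simp only [Pi.sub_apply]
    rw [hgneg u, show (-1 : ℝ) * u + m = m - u from by ring,
      show u - -h = u + h from by ring]
  have hH_int : Integrable H := by
    apply (hgneg_int.add hg_int).congr
    filter_upwards with u
    simp only [Pi.add_apply]
    rw [hgneg u]
    simp only [hg_def, hH_def]
    ring
  -- step A : tmu d s - tmu d t = ∫ g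
  have stepA : tmu d s - tmu d t = ∫ u, g u := by
    rw [tmu_eq, tmu_eq, ← integral_sub hI1 hI2,
      ← integral_add_right_eq_self (fun x => F d x * phi (x - s) - F d x * phi (x - t)) m]
    congr 1
    ext u
    simp only [hg_def]
    rw [show u + m - s = u + h from by simp only [hm_def, hh_def]; ring,
      show u + m - t = u - h from by simp only [hm_def, hh_def]; ring]
  -- step B/C/D/E : ∫ g = ∫_{Ioi 0} H
  have stepB : ∫ u, g u = ∫ u in Ioi 0, H u := by
    rw [← integral_add_compl (measurableSet_Ioi (a := (0:ℝ))) hg_int, compl_Ioi]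
    have hC : ∫ u in Iic (0:ℝ), g u = ∫ u in Ioi (0:ℝ), g (-u) := by
      rw [integral_comp_neg_Ioi]; simp
    rw [hC, ← integral_add hg_int.integrableOn hgneg_int.integrableOn]
    apply setIntegral_congr_fun measurableSet_Ioi
    intro u _
    show g u + g (-u) = H u
    rw [hgneg u]
    simp only [hg_def, hH_def]
    ring
  -- step F : positivity
  have hae_ne : ∀ᵐ u ∂(volume.restrict (Ioi (0:ℝ))), u ≠ m := by
    apply ae_restrict_of_ae
    rw [ae_iff]
    refine measure_mono_null (fun u hu => ?_) (measure_singleton m)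
    simpa using hu
  have hpos : 0 < ∫ u in Ioi (0:ℝ), H u := by
    rw [setIntegral_pos_iff_support_of_nonneg_ae]
    · -- support big
      have hsub : Ioi (max m (d : ℝ)⁻¹) ⊆ Function.support H ∩ Ioi 0 := by
        intro u hu
        simp only [mem_Ioi, max_lt_iff] at hu
        obtain ⟨hum, hud⟩ := hu
        have hu0 : 0 < u := lt_trans hm hum
        have hd0 : (0:ℝ) < d := by exact_mod_cast hd
        have hdu : (d:ℝ)⁻¹ < u + m := by linarith
        constructor
        · -- H u ≠ 0, indeed positive
          have h1 : phi (u + h) < phi (u - h) := phi_lt (by nlinarith)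
          have h2 : F d (u + m) < F d (m - u) := by
            have hFu : F d (u + m) = (u + m)⁻¹ := by
              unfold F
              rw [abs_of_pos (by linarith), min_eq_left]
              rw [inv_le_comm₀ (by linarith) hd0]
              linarith
            rw [hFu]
            unfold F
            rw [abs_of_neg (by linarith), neg_sub]
            apply lt_min
            · rw [inv_lt_inv₀ (by linarith) (by linarith)]
              linarith
            · rw [inv_lt_comm₀ (by linarith) hd0]
              linarith
          simp only [Function.mem_support, hH_def]
          exact ne_of_gt (mul_pos (sub_pos.2 h2) (sub_pos.2 h1))
        · exact mem_Ioi.2 hu0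
      calc (0 : ENNReal) < volume (Ioi (max m (d:ℝ)⁻¹)) := by
            rw [Real.volume_Ioi]; exact ENNReal.zero_lt_top
        _ ≤ volume (Function.support H ∩ Ioi 0) := measure_mono hsub
    · -- nonneg a.e.
      filter_upwards [hae_ne, ae_restrict_mem measurableSet_Ioi] with u hne hu
      simp only [mem_Ioi] at hu
      simp only [Pi.zero_apply, hH_def]
      apply mul_nonneg
      · rw [sub_nonneg]
        apply F_anti
        · exact fun h0 => hne (by linarith [sub_eq_zero.mp h0])
        · rw [abs_of_pos (by linarith : (0:ℝ) < u + m)]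
          rw [abs_le]; constructor <;> linarith
      · rw [sub_nonneg]; exact phi_anti (by nlinarith)
    · exact hH_int.integrableOn
  rw [stepA, stepB]
  exact hpos

section Quant

open intervalIntegral

lemma F_intervalIntegrable (d : ℕ) (a b : ℝ) : IntervalIntegrable (F d) volume a b := by
  rw [intervalIntegrable_iff]
  apply Measure.integrableOn_of_bounded (M := (d : ℝ)) measure_Ioc_lt_top.ne
    (measurable_F d).aestronglyMeasurable
  filter_upwards with x
  rw [Real.norm_eq_abs, abs_of_nonneg (F_nonneg _ _)]
  exact F_le _ _

lemma Fphi_intervalIntegrable (d : ℕ) (s a b : ℝ) :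
    IntervalIntegrable (fun x => F d x * phi (x - s)) volume a b := by
  rw [intervalIntegrable_iff]
  exact ((integrable_Fphi d 1 0 s).congr (by
    filter_upwards with u; simp)).integrableOn

lemma integral_F_right (d : ℕ) (hd : 1 ≤ d) :
    ∫ x in ((d:ℝ)⁻¹)..1, F d x ≤ Real.log d := by
  have hd0 : (0:ℝ) < d := by exact_mod_cast hd
  have hd1 : (d:ℝ)⁻¹ ≤ 1 := by
    rw [inv_le_one_iff₀]; right; exact_mod_cast hd
  have h0 : (0:ℝ) ∉ Set.uIcc ((d:ℝ)⁻¹) 1 := by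
    rw [Set.uIcc_of_le hd1]
    intro hc
    rcases hc with ⟨h1, _⟩
    have : (0:ℝ) < (d:ℝ)⁻¹ := by positivity
    linarith
  calc ∫ x in ((d:ℝ)⁻¹)..1, F d x ≤ ∫ x in ((d:ℝ)⁻¹)..1, x⁻¹ := by
        apply integral_mono_on hd1 (F_intervalIntegrable d _ _) (intervalIntegrable_inv (fun x hx => fun hc => h0 (hc ▸ hx)) continuousOn_id)
        intro x hx
        rcases hx with ⟨hx1, _⟩
        have hx0 : 0 < x := lt_of_lt_of_le (by positivity) hx1
        unfold F
        rw [abs_of_pos hx0]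
        exact min_le_left _ _
    _ = Real.log d := by rw [integral_inv h0]; simp

lemma integral_F_left (d : ℕ) (hd : 1 ≤ d) :
    ∫ x in (-1 : ℝ)..(-(d:ℝ)⁻¹), F d x ≤ Real.log d := by
  have : ∫ x in (-1 : ℝ)..(-(d:ℝ)⁻¹), F d x = ∫ x in ((d:ℝ)⁻¹)..1, F d x := by
    rw [show ∫ x in ((d:ℝ)⁻¹)..1, F d x = ∫ x in ((d:ℝ)⁻¹)..1, F d (-x) from by
        congr 1; ext x; rw [F_even],
      integral_comp_neg]
  rw [this]
  exact integral_F_right d hd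

lemma integral_F_total (d : ℕ) (hd : 1 ≤ d) :
    ∫ x in (-1 : ℝ)..1, F d x ≤ 2 * Real.log d + 2 := by
  have hd0 : (0:ℝ) < d := by exact_mod_cast hd
  have hd1 : (d:ℝ)⁻¹ ≤ 1 := by rw [inv_le_one_iff₀]; right; exact_mod_cast hd
  have hsplit1 : (∫ x in (-1:ℝ)..(-(d:ℝ)⁻¹), F d x) + ∫ x in (-(d:ℝ)⁻¹)..((d:ℝ)⁻¹), F d x
      = ∫ x in (-1:ℝ)..((d:ℝ)⁻¹), F d x :=
    integral_add_adjacent_intervals (F_intervalIntegrable d _ _) (F_intervalIntegrable d _ _)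
  have hsplit2 : (∫ x in (-1:ℝ)..((d:ℝ)⁻¹), F d x) + ∫ x in ((d:ℝ)⁻¹)..1, F d x
      = ∫ x in (-1:ℝ)..1, F d x :=
    integral_add_adjacent_intervals (F_intervalIntegrable d _ _) (F_intervalIntegrable d _ _)
  have hmid : ∫ x in (-(d:ℝ)⁻¹)..((d:ℝ)⁻¹), F d x ≤ 2 := by
    calc ∫ x in (-(d:ℝ)⁻¹)..((d:ℝ)⁻¹), F d x ≤ ∫ _x in (-(d:ℝ)⁻¹)..((d:ℝ)⁻¹), (d:ℝ) := by
          apply integral_mono_on (by linarith [inv_pos.2 hd0]) (F_intervalIntegrable d _ _)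
            intervalIntegrable_const
          intro x _
          exact F_le d x
      _ = ((d:ℝ)⁻¹ - (-(d:ℝ)⁻¹)) * d := by rw [intervalIntegral.integral_const]; simp [smul_eq_mul]
      _ = 2 := by field_simp; ring
  linarith [integral_F_left d hd, integral_F_right d hd]

lemma tmu_upper (d : ℕ) (hd : 1 ≤ d) (s : ℝ) :
    tmu d s ≤ phi 0 * (2 * Real.log d + 2) + 1 := by
  set G : ℝ → ℝ := fun x => F d x * phi (x - s) with hG_def
  have hG_int : Integrable G := by
    apply (integrable_Fphi d 1 0 s).congr
    filter_upwards with x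
    simp [hG_def]
  have hG_nonneg : ∀ x, 0 ≤ G x := fun x => mul_nonneg (F_nonneg d x) (phi_nonneg _)
  have hrepr : tmu d s = (∫ x in Icc (-1:ℝ) 1, G x) + ∫ x in (Icc (-1:ℝ) 1)ᶜ, G x := by
    rw [tmu_eq, ← integral_add_compl (measurableSet_Icc (a := (-1:ℝ)) (b := 1)) hG_int]
  have hA : ∫ x in Icc (-1:ℝ) 1, G x ≤ phi 0 * (2 * Real.log d + 2) := by
    have hFIcc : IntegrableOn (fun x => phi 0 * F d x) (Icc (-1:ℝ) 1) := by
      apply Measure.integrableOn_of_bounded (M := phi 0 * d) measure_Icc_lt_top.ne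
        ((measurable_F d).const_mul _).aestronglyMeasurable
      filter_upwards with x
      rw [Real.norm_eq_abs, abs_of_nonneg (mul_nonneg (phi_nonneg 0) (F_nonneg d x))]
      exact mul_le_mul_of_nonneg_left (F_le d x) (phi_nonneg 0)
    calc ∫ x in Icc (-1:ℝ) 1, G x ≤ ∫ x in Icc (-1:ℝ) 1, phi 0 * F d x := by
          apply setIntegral_mono_on hG_int.integrableOn hFIcc measurableSet_Icc
          intro x _
          rw [hG_def, mul_comm (phi 0)]
          exact mul_le_mul_of_nonneg_left (phi_le_phi_zero _) (F_nonneg d x)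
      _ = phi 0 * ∫ x in Icc (-1:ℝ) 1, F d x := integral_const_mul _ _
      _ ≤ phi 0 * (2 * Real.log d + 2) := by
          apply mul_le_mul_of_nonneg_left _ (phi_nonneg 0)
          rw [integral_Icc_eq_integral_Ioc, ← intervalIntegral.integral_of_le (by linarith : (-1:ℝ) ≤ 1)]
          exact integral_F_total d hd
  have hB : ∫ x in (Icc (-1:ℝ) 1)ᶜ, G x ≤ 1 := by
    have hphi_int : Integrable (fun x : ℝ => phi (x - s)) := integrable_phi.comp_sub_right s
    calc ∫ x in (Icc (-1:ℝ) 1)ᶜ, G x ≤ ∫ x in (Icc (-1:ℝ) 1)ᶜ, phi (x - s) := by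
          apply setIntegral_mono_on hG_int.integrableOn hphi_int.integrableOn
            measurableSet_Icc.compl
          intro x hx
          simp only [mem_compl_iff, mem_Icc, not_and_or, not_le] at hx
          have h1 : (1:ℝ) ≤ |x| := by
            rcases hx with hx | hx
            · rw [abs_of_neg (by linarith)]; linarith
            · rw [abs_of_pos (by linarith)]; linarith
          have hF1 : F d x ≤ 1 := by
            refine le_trans (min_le_left _ _) ?_
            rw [inv_le_one_iff₀]; right; exact h1
          rw [hG_def]
          calc F d x * phi (x - s) ≤ 1 * phi (x - s) :=
                mul_le_mul_of_nonneg_right hF1 (phi_nonneg _)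
            _ = phi (x - s) := one_mul _
      _ ≤ ∫ x, phi (x - s) :=
          setIntegral_le_integral hphi_int (Filter.Eventually.of_forall fun x => phi_nonneg _)
      _ = 1 := by rw [integral_sub_right_eq_self phi s, integral_phi]
  rw [hrepr]
  linarith

lemma tmu_lower (d : ℕ) (hd : 1 ≤ d) :
    2 * phi 0 * Real.log d - phi 0 / 2 ≤ tmu d 0 := by
  have hd0 : (0:ℝ) < d := by exact_mod_cast hd
  have hdinv : (0:ℝ) < (d:ℝ)⁻¹ := by positivity
  have hd1 : (d:ℝ)⁻¹ ≤ 1 := by rw [inv_le_one_iff₀]; right; exact_mod_cast hd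
  set G : ℝ → ℝ := fun x => F d x * phi (x - 0) with hG_def
  have hG_int : Integrable G := by
    apply (integrable_Fphi d 1 0 0).congr
    filter_upwards with x
    simp [hG_def]
  have hG_nonneg : ∀ x, 0 ≤ G x := fun x => mul_nonneg (F_nonneg d x) (phi_nonneg _)
  have hGint' : ∀ a b : ℝ, IntervalIntegrable G volume a b := fun a b =>
    Fphi_intervalIntegrable d 0 a b
  have hstep1 : ∫ x in Icc (-1:ℝ) 1, G x ≤ tmu d 0 := by
    rw [tmu_eq]
    exact setIntegral_le_integral hG_int (Filter.Eventually.of_forall hG_nonneg)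
  have hIcc : ∫ x in Icc (-1:ℝ) 1, G x = ∫ x in (-1:ℝ)..1, G x := by
    rw [integral_Icc_eq_integral_Ioc, ← intervalIntegral.integral_of_le (by linarith : (-1:ℝ) ≤ 1)]
  have hsplit1 : (∫ x in (-1:ℝ)..(-(d:ℝ)⁻¹), G x) + ∫ x in (-(d:ℝ)⁻¹)..((d:ℝ)⁻¹), G x
      = ∫ x in (-1:ℝ)..((d:ℝ)⁻¹), G x :=
    intervalIntegral.integral_add_adjacent_intervals (hGint' _ _) (hGint' _ _)
  have hsplit2 : (∫ x in (-1:ℝ)..((d:ℝ)⁻¹), G x) + ∫ x in ((d:ℝ)⁻¹)..1, G x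
      = ∫ x in (-1:ℝ)..1, G x :=
    intervalIntegral.integral_add_adjacent_intervals (hGint' _ _) (hGint' _ _)
  have hmid : (0:ℝ) ≤ ∫ x in (-(d:ℝ)⁻¹)..((d:ℝ)⁻¹), G x :=
    intervalIntegral.integral_nonneg (by linarith) (fun x _ => hG_nonneg x)
  have hleft : ∫ x in (-1:ℝ)..(-(d:ℝ)⁻¹), G x = ∫ x in ((d:ℝ)⁻¹)..1, G x := by
    rw [show ∫ x in ((d:ℝ)⁻¹)..1, G x = ∫ x in ((d:ℝ)⁻¹)..1, G (-x) from by
        congr 1; ext x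
        simp only [hG_def]
        rw [F_even, show -x - 0 = -(x - 0) from by ring, phi_even],
      intervalIntegral.integral_comp_neg]
  have hright : phi 0 * (Real.log d - 1/4) ≤ ∫ x in ((d:ℝ)⁻¹)..1, G x := by
    have hcont : ContinuousOn (fun x : ℝ => phi 0 * (x⁻¹ - x/2)) (Set.uIcc ((d:ℝ)⁻¹) 1) := by
      apply ContinuousOn.mul continuousOn_const
      apply ContinuousOn.sub
      · apply ContinuousOn.inv₀ continuousOn_id
        intro x hx
        rw [Set.uIcc_of_le hd1] at hx
        exact ne_of_gt (lt_of_lt_of_le hdinv hx.1)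
      · exact continuousOn_id.div_const 2
    have hmono : ∫ x in ((d:ℝ)⁻¹)..1, phi 0 * (x⁻¹ - x/2) ≤ ∫ x in ((d:ℝ)⁻¹)..1, G x := by
      apply intervalIntegral.integral_mono_on hd1 (hcont.intervalIntegrable) (hGint' _ _)
      intro x hx
      rcases hx with ⟨hx1, hx2⟩
      have hx0 : 0 < x := lt_of_lt_of_le hdinv hx1
      have hFx : F d x = x⁻¹ := by
        unfold F
        rw [abs_of_pos hx0, min_eq_left]
        rw [inv_le_comm₀ hx0 hd0]
        exact hx1
      simp only [hG_def, hFx, sub_zero]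
      have h1 := phi_ge x
      have h2 : x⁻¹ * (phi 0 * (1 - x ^ 2 / 2)) ≤ x⁻¹ * phi x :=
        mul_le_mul_of_nonneg_left h1 (by positivity)
      have hxx : x⁻¹ * x ^ 2 = x := by
        rw [sq, ← mul_assoc, inv_mul_cancel₀ (ne_of_gt hx0), one_mul]
      have h3 : x⁻¹ * (phi 0 * (1 - x ^ 2 / 2)) = phi 0 * (x⁻¹ - x/2) := by
        linear_combination (-(phi 0)/2) * hxx
      linarith
    have h0 : (0:ℝ) ∉ Set.uIcc ((d:ℝ)⁻¹) 1 := by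
      rw [Set.uIcc_of_le hd1]
      rintro ⟨h1, _⟩
      linarith
    have hi1 : IntervalIntegrable (fun x : ℝ => x⁻¹) volume ((d:ℝ)⁻¹) 1 :=
      intervalIntegrable_inv (fun x hx => fun hc => h0 (hc ▸ hx)) continuousOn_id
    have hi2 : IntervalIntegrable (fun x : ℝ => x / 2) volume ((d:ℝ)⁻¹) 1 :=
      (continuous_id'.div_const 2).intervalIntegrable _ _
    have hsub : ∫ x in ((d:ℝ)⁻¹)..1, (x⁻¹ - x/2)
        = (∫ x in ((d:ℝ)⁻¹)..1, x⁻¹) - ∫ x in ((d:ℝ)⁻¹)..1, x/2 :=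
      intervalIntegral.integral_sub hi1 hi2
    have hdiv : ∫ x in ((d:ℝ)⁻¹)..1, x / 2 = (∫ x in ((d:ℝ)⁻¹)..1, (x:ℝ)) / 2 :=
      intervalIntegral.integral_div 2 _
    have hval : ∫ x in ((d:ℝ)⁻¹)..1, phi 0 * (x⁻¹ - x/2)
        = phi 0 * (Real.log d - (1 - ((d:ℝ)⁻¹)^2)/4) := by
      rw [intervalIntegral.integral_const_mul]
      congr 1
      rw [hsub, hdiv, integral_inv h0, integral_id]
      rw [show (1:ℝ) / (d:ℝ)⁻¹ = (d:ℝ) from by field_simp]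
      ring
    have hineq : phi 0 * (Real.log d - 1/4) ≤ phi 0 * (Real.log d - (1 - ((d:ℝ)⁻¹)^2)/4) := by
      apply mul_le_mul_of_nonneg_left _ (phi_nonneg 0)
      nlinarith [sq_nonneg ((d:ℝ)⁻¹)]
    rw [hval] at hmono
    linarith
  have : 2 * (phi 0 * (Real.log d - 1/4)) ≤ ∫ x in (-1:ℝ)..1, G x := by
    rw [← hsplit2, ← hsplit1, hleft]
    linarith
  rw [hIcc] at hstep1
  nlinarith [phi_nonneg 0]

end Quant

lemma phi_zero_pos : 0 < phi 0 := by
  unfold phi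
  positivity

lemma phi0_val : 2 * phi 0 = Real.sqrt (2 / Real.pi) := by
  unfold phi
  have hpi : (0:ℝ) < Real.pi := Real.pi_pos
  rw [Real.sqrt_div' 2 hpi.le, Real.sqrt_mul (by norm_num : (0:ℝ) ≤ 2)]
  have h2 : Real.sqrt 2 ≠ 0 := ne_of_gt (Real.sqrt_pos.2 (by norm_num))
  have hp : Real.sqrt Real.pi ≠ 0 := ne_of_gt (Real.sqrt_pos.2 hpi)
  have hss : Real.sqrt 2 * Real.sqrt 2 = 2 := Real.mul_self_sqrt (by norm_num)
  rw [show (-(0:ℝ) ^ 2 / 2) = 0 from by norm_num, Real.exp_zero]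
  field_simp
  rw [sq, hss]

lemma log_ge_log2 {d : ℕ} (hd : 2 ≤ d) : Real.log 2 ≤ Real.log d :=
  Real.log_le_log (by norm_num) (by exact_mod_cast hd)

lemma log2_pos : (0:ℝ) < Real.log 2 := Real.log_pos (by norm_num)

lemma tmu_limit : Tendsto (fun d : ℕ => tmu d 0 / Real.log d) atTop
    (nhds (Real.sqrt (2 / Real.pi))) := by
  rw [← tendsto_sub_nhds_zero_iff]
  apply squeeze_zero_norm' (a := fun d : ℕ => (2 * phi 0 + 1) / Real.log d)
  · filter_upwards [eventually_ge_atTop 2] with d hd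
    have hd1 : 1 ≤ d := le_trans (by norm_num) hd
    have hlog : (0:ℝ) < Real.log d := lt_of_lt_of_le log2_pos (log_ge_log2 hd)
    have hup := tmu_upper d hd1 0
    have hlo := tmu_lower d hd1
    have habs : |tmu d 0 - Real.sqrt (2 / Real.pi) * Real.log d| ≤ 2 * phi 0 + 1 := by
      rw [← phi0_val, abs_le]
      constructor
      · nlinarith [phi_zero_pos]
      · nlinarith
    have heq : tmu d 0 / Real.log d - Real.sqrt (2 / Real.pi)
        = (tmu d 0 - Real.sqrt (2 / Real.pi) * Real.log d) / Real.log d := by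
      field_simp
    rw [Real.norm_eq_abs, heq, abs_div, abs_of_pos hlog]
    gcongr
  · apply Tendsto.div_atTop tendsto_const_nhds
    exact Real.tendsto_log_atTop.comp tendsto_natCast_atTop_atTop

lemma tmu_bound : ∃ C : ℝ, 0 < C ∧ ∀ d : ℕ, 2 ≤ d → ∀ s : ℝ, tmu d s ≤ C * Real.log d := by
  refine ⟨Real.sqrt (2 / Real.pi) + (2 * phi 0 + 1) / Real.log 2, ?_, ?_⟩
  · have h1 : (0:ℝ) < Real.sqrt (2 / Real.pi) := Real.sqrt_pos.2 (by positivity)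
    have h2 : (0:ℝ) < (2 * phi 0 + 1) / Real.log 2 := by
      apply div_pos _ log2_pos
      linarith [phi_zero_pos]
    linarith
  · intro d hd s
    have hd1 : 1 ≤ d := le_trans (by norm_num) hd
    have hlog : (0:ℝ) < Real.log d := lt_of_lt_of_le log2_pos (log_ge_log2 hd)
    have hup := tmu_upper d hd1 s
    have h1 : phi 0 * (2 * Real.log d + 2) + 1
        = Real.sqrt (2 / Real.pi) * Real.log d + (2 * phi 0 + 1) := by
      rw [← phi0_val]; ring
    have h2 : 2 * phi 0 + 1 ≤ (2 * phi 0 + 1) / Real.log 2 * Real.log d := by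
      rw [div_mul_eq_mul_div, le_div_iff₀ log2_pos]
      have := log_ge_log2 hd
      nlinarith [phi_zero_pos]
    rw [h1] at hup
    linarith [hup, h2]

theorem stmt17 :
    (∀ d : ℕ, 1 ≤ d →
      (∀ s : ℝ, tmu d (-s) = tmu d s) ∧
      Continuous (tmu d) ∧
      StrictAntiOn (tmu d) (Set.Ici 0) ∧
      Filter.Tendsto (tmu d) Filter.atTop (nhds 0)) ∧
    Filter.Tendsto (fun d : ℕ => tmu d 0 / Real.log d) Filter.atTop
      (nhds (Real.sqrt (2 / Real.pi))) ∧
    (∃ C : ℝ, 0 < C ∧ ∀ d : ℕ, 2 ≤ d → ∀ s : ℝ, tmu d s ≤ C * Real.log d) := by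
  refine ⟨fun d hd => ⟨tmu_even d, tmu_continuous d, tmu_strictAnti d hd, tmu_tendsto d⟩,
    tmu_limit, tmu_bound⟩
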